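/- For every positive integer L and every integer r ≥ 0, the number of MT-pairs (k₁,k₀) with 1 ≤ k₁ < k₀ ≤ L and 2^{r−1} < k₀ − k₁ ≤ 2^r is at most L. -/

import Mathlib

open scoped Classical

def MTpair (k1 k0 : ℕ) : Prop :=
  1 ≤ k1 ∧ k1 < k0 ∧ k0 - k1 ≤ 2 ^ max (padicValNat 2 k1) (padicValNat 2 k0)

/-- In any window of `t` consecutive integers there is at most one multiple of `t`. -/
lemma uniq_mult (t a b n : ℕ) (ha : t ∣ a) (hb : t ∣ b)
    (h1 : n ≤ a) (h2 : a < n + t) (h3 : n ≤ b) (h4 : b < n + t) : a = b := by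
  obtain ⟨x, rfl⟩ := ha
  obtain ⟨y, rfl⟩ := hb
  rcases lt_trichotomy x y with h | h | h
  · have : t * (x + 1) ≤ t * y := Nat.mul_le_mul_left t h
    rw [Nat.mul_add, Nat.mul_one] at this
    omega
  · rw [h]
  · have : t * (y + 1) ≤ t * x := Nat.mul_le_mul_left t h
    rw [Nat.mul_add, Nat.mul_one] at this
    omega

lemma facts (L r : ℕ) (q : ℕ × ℕ)
    (hq : q ∈ (Finset.Icc 1 L ×ˢ Finset.Icc 1 L).filter
      (fun q => MTpair q.1 q.2 ∧
        (2 : ℝ) ^ ((r : ℤ) - 1) < ((q.2 - q.1 : ℕ) : ℝ) ∧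
        ((q.2 - q.1 : ℕ) : ℝ) ≤ 2 ^ r)) :
    1 ≤ q.1 ∧ q.1 < q.2 ∧ q.2 ≤ L ∧ q.2 - q.1 ≤ 2 ^ r ∧
      (2 ^ r ∣ q.1 ∨ 2 ^ r ∣ q.2) ∧ (1 ≤ r → 2 ^ (r - 1) < q.2 - q.1) := by
  simp only [Finset.mem_filter, Finset.mem_product, Finset.mem_Icc] at hq
  obtain ⟨⟨⟨h11, h1L⟩, h21, h2L⟩, ⟨hk1, hlt, hMT⟩, hlow, hhigh⟩ := hq
  have hdle : q.2 - q.1 ≤ 2 ^ r := by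
    have h' : ((q.2 - q.1 : ℕ) : ℝ) ≤ ((2 ^ r : ℕ) : ℝ) := by push_cast; exact hhigh
    exact_mod_cast h'
  have hlow' : 1 ≤ r → 2 ^ (r - 1) < q.2 - q.1 := by
    intro hr
    have he : ((2 : ℝ)) ^ ((r : ℤ) - 1) = ((2 ^ (r - 1) : ℕ) : ℝ) := by
      rw [show (r : ℤ) - 1 = ((r - 1 : ℕ) : ℤ) by omega, zpow_natCast]
      push_cast; ring
    rw [he] at hlow
    exact_mod_cast hlow
  refine ⟨hk1, hlt, h2L, hdle, ?_, hlow'⟩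
  have hrM : r ≤ max (padicValNat 2 q.1) (padicValNat 2 q.2) := by
    rcases Nat.eq_zero_or_pos r with rfl | hr
    · exact Nat.zero_le _
    · have h1 : 2 ^ (r - 1) < 2 ^ max (padicValNat 2 q.1) (padicValNat 2 q.2) :=
        lt_of_lt_of_le (hlow' hr) hMT
      have := (Nat.pow_lt_pow_iff_right (by norm_num : 1 < 2)).mp h1
      omega
  rcases le_max_iff.mp hrM with h | h
  · exact Or.inl ((pow_dvd_pow 2 h).trans pow_padicValNat_dvd)
  · exact Or.inr ((pow_dvd_pow 2 h).trans pow_padicValNat_dvd)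

theorem MT_pairs_in_class_le (L : ℕ) (hL : 0 < L) (r : ℕ) :
    (((Finset.Icc 1 L ×ˢ Finset.Icc 1 L).filter
      (fun q => MTpair q.1 q.2 ∧
        (2 : ℝ) ^ ((r : ℤ) - 1) < ((q.2 - q.1 : ℕ) : ℝ) ∧
        ((q.2 - q.1 : ℕ) : ℝ) ≤ 2 ^ r)).card : ℕ) ≤ L := by
  classical
  have h2 : 1 ≤ r → 2 ^ r = 2 * 2 ^ (r - 1) := by
    intro hr
    rw [← pow_succ']
    congr 1
    omega
  set f : ℕ × ℕ → ℕ := fun q =>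
    if 2 ^ r ∣ q.2 then q.1 + 1 else q.1 + 2 ^ (r - 1) + 1 - (q.2 - q.1) with hf
  have key : ((Finset.Icc 1 L ×ˢ Finset.Icc 1 L).filter
      (fun q => MTpair q.1 q.2 ∧
        (2 : ℝ) ^ ((r : ℤ) - 1) < ((q.2 - q.1 : ℕ) : ℝ) ∧
        ((q.2 - q.1 : ℕ) : ℝ) ≤ 2 ^ r)).card ≤ (Finset.Icc 1 L).card := by
    apply Finset.card_le_card_of_injOn f ?hmem ?hinj
    case hmem =>
      intro q hq
      obtain ⟨h1, h2', h3, h4, h5, h6⟩ := facts L r q hq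
      simp only [hf, Finset.mem_coe, Finset.mem_Icc]
      split_ifs with hdvd
      · omega
      · have hr : 1 ≤ r := by
          by_contra h
          exact hdvd (by simpa [show r = 0 by omega] using (one_dvd q.2))
        have hd1 : 2 ^ r ∣ q.1 := by
          rcases h5 with h | h
          · exact h
          · exact absurd h hdvd
        have hk1 : 2 ^ r ≤ q.1 := Nat.le_of_dvd (by omega) hd1
        have := h6 hr
        have := h2 hr
        omega
    case hinj =>
      intro q hq q' hq' hfe
      obtain ⟨p1, p2, p3, p4, p5, p6⟩ := facts L r q hq
      obtain ⟨s1, s2, s3, s4, s5, s6⟩ := facts L r q' hq'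
      simp only [hf] at hfe
      have hdvd1 : ¬ 2 ^ r ∣ q.2 → (1 ≤ r ∧ 2 ^ r ∣ q.1 ∧ 2 ^ r ≤ q.1) := by
        intro hdvd
        have hr : 1 ≤ r := by
          by_contra h
          exact hdvd (by simpa [show r = 0 by omega] using (one_dvd q.2))
        have hd1 : 2 ^ r ∣ q.1 := by
          rcases p5 with h | h
          · exact h
          · exact absurd h hdvd
        exact ⟨hr, hd1, Nat.le_of_dvd (by omega) hd1⟩
      have hdvd1' : ¬ 2 ^ r ∣ q'.2 → (1 ≤ r ∧ 2 ^ r ∣ q'.1 ∧ 2 ^ r ≤ q'.1) := by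
        intro hdvd
        have hr : 1 ≤ r := by
          by_contra h
          exact hdvd (by simpa [show r = 0 by omega] using (one_dvd q'.2))
        have hd1 : 2 ^ r ∣ q'.1 := by
          rcases s5 with h | h
          · exact h
          · exact absurd h hdvd
        exact ⟨hr, hd1, Nat.le_of_dvd (by omega) hd1⟩
      split_ifs at hfe with hA hB hB
      · -- both branch 1
        have h1 : q.1 = q'.1 := by omega
        have h2' : q.2 = q'.2 := by
          apply uniq_mult (2 ^ r) _ _ (q.1 + 1) hA hB <;> omega
        exact Prod.ext h1 h2'
      · -- q branch1, q' branch2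
        exfalso
        obtain ⟨hr, hd1, hk1⟩ := hdvd1' hB
        have hlow := p6 hr
        have hlow' := s6 hr
        have h2r := h2 hr
        -- q.2 and q'.1 are both multiples of 2^r in [q.1+1, q.1+2^r]
        have heq : q.2 = q'.1 :=
          uniq_mult (2 ^ r) _ _ (q.1 + 1) hA hd1 (by omega) (by omega) (by omega) (by omega)
        omega
      · -- q branch2, q' branch1
        exfalso
        obtain ⟨hr, hd1, hk1⟩ := hdvd1 hA
        have hlow := p6 hr
        have hlow' := s6 hr
        have h2r := h2 hr
        have heq : q'.2 = q.1 :=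
          uniq_mult (2 ^ r) _ _ (q'.1 + 1) hB hd1 (by omega) (by omega) (by omega) (by omega)
        omega
      · -- both branch2
        obtain ⟨hr, hd1, hk1⟩ := hdvd1 hA
        obtain ⟨_, hd1', hk1'⟩ := hdvd1' hB
        have hlow := p6 hr
        have hlow' := s6 hr
        have h2r := h2 hr
        set n := f q with hn
        have h1 : q.1 = q'.1 := by
          apply uniq_mult (2 ^ r) _ _ (q.1 + 2 ^ (r - 1) + 1 - (q.2 - q.1)) hd1 hd1' <;> omega
        have h2' : q.2 = q'.2 := by omega
        exact Prod.ext h1 h2'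
  calc _ ≤ (Finset.Icc 1 L).card := key
    _ = L := by simp
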